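/- arXiv:1510.03292 — 6 statements merged into one kernel-verified Lean document; each statement's English description precedes it below -/
import Mathlib

section
/- Let A be a unital complex *-algebra, ε: A → ℂ a unital *-homomorphism, D a complex inner product space, π: A → End(D) a unital *-representation, and η: A → D a linear map satisfying the cocycle identity η(ab) = π(a)η(b) + ε(b)η(a) for all a,b ∈ A. Then the bilinear map L(η): A × A → ℂ defined by L(η)(a,b) = ⟨η(a*), η(b)⟩ is a Hochschild 2-cocycle for the bimodule ℂ with both actions given by ε; that is, ε(a)L(η)(b,c) − L(η)(ab,c) + L(η)(a,bc) − L(η)(a,b)ε(c) = 0 for all a,b,c ∈ A. -/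
open scoped InnerProductSpace

/-- For a unital complex `*`-algebra `A`, a character `ε : A → ℂ`,
a unital `*`-representation `π` of `A` on a complex inner product space `D`, and a
`π`-`ε`-cocycle `η`, the bilinear map `L(η)(a,b) = ⟪η(a*), η(b)⟫` is a Hochschild
2-cocycle for the `ε`-`ε`-bimodule `ℂ`. -/
theorem levyKhinchin_stmt0
    {A : Type*} [Ring A] [Algebra ℂ A] [StarRing A] [StarModule ℂ A]
    {D : Type*} [NormedAddCommGroup D] [InnerProductSpace ℂ D]
    (ε : A →⋆ₐ[ℂ] ℂ) (π : A →ₐ[ℂ] (D →ₗ[ℂ] D))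
    (hπ : ∀ (a : A) (u v : D), ⟪π (star a) u, v⟫_ℂ = ⟪u, π a v⟫_ℂ)
    (η : A →ₗ[ℂ] D)
    (hη : ∀ a b : A, η (a * b) = π a (η b) + ε b • η a) :
    ∀ a b c : A,
      ε a * ⟪η (star b), η c⟫_ℂ - ⟪η (star (a * b)), η c⟫_ℂ
        + ⟪η (star a), η (b * c)⟫_ℂ - ⟪η (star a), η b⟫_ℂ * ε c = 0 := by
  intro a b c
  have h1 : η (star (a * b)) = π (star b) (η (star a)) + ε (star a) • η (star b) := by
    rw [star_mul]; exact hη (star b) (star a)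
  have h2 : η (b * c) = π b (η c) + ε c • η b := hη b c
  have hεa : ε (star a) = starRingEnd ℂ (ε a) := by
    simp [map_star]
  rw [h1, h2, inner_add_left, inner_add_right, inner_smul_left, inner_smul_right,
    hπ b (η (star a)) (η c), hεa]
  simp only [RingHom.id_apply, starRingEnd_self_apply]
  ring
end

section
/- Let G = ⟨a, b, r | aba⁻¹b⁻¹ = r² = (ra)² = (rb)² = 1⟩ be the wallpaper group p2, D a complex pre-Hilbert space, and define π on the generators by π(a) = π(b) = id_D, π(r) = −id_D. Then π extends to a unital *-representation of ℂ[G] on D, and for any x, y, z ∈ D there exists a (unique) π-ε-cocycle η: ℂ[G] → D with η(a) = x, η(b) = y, η(r) = z. -/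
open scoped InnerProductSpace

set_option linter.unusedSectionVars false

namespace LKaux

variable (D : Type*) [NormedAddCommGroup D] [InnerProductSpace ℂ D]

/-- The semidirect product `D ⋊ ℤˣ` with the sign acting by negation. -/
def K := D × ℤˣ

variable {D}

instance : Group (K D) where
  mul p q := (p.1 + (p.2 : ℤ) • q.1, p.2 * q.2)
  one := (0, 1)
  inv p := (-((p.2 : ℤ) • p.1), p.2)
  mul_assoc p q s := by
    refine Prod.ext ?_ (mul_assoc p.2 q.2 s.2)
    show p.1 + (p.2:ℤ) • q.1 + ((p.2*q.2 : ℤˣ):ℤ) • s.1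
        = p.1 + (p.2:ℤ) • (q.1 + (q.2:ℤ) • s.1)
    push_cast
    rw [smul_add, mul_smul]
    abel
  one_mul p := by
    show ((0:D) + ((1:ℤˣ):ℤ) • p.1, 1 * p.2) = p
    simp
    rfl
  mul_one p := by
    show (p.1 + (p.2:ℤ) • (0:D), p.2 * 1) = p
    simp
    rfl
  inv_mul_cancel p := by
    refine Prod.ext ?_ ?_
    · show -((p.2:ℤ) • p.1) + (p.2:ℤ) • p.1 = 0
      simp
    · show p.2 * p.2 = 1
      rcases Int.units_eq_one_or p.2 with h | h <;> simp [h]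

@[simp] lemma mul_fst (p q : K D) : (p * q).1 = p.1 + (p.2 : ℤ) • q.1 := rfl
@[simp] lemma mul_snd (p q : K D) : (p * q).2 = p.2 * q.2 := rfl
@[simp] lemma one_fst : (1 : K D).1 = 0 := rfl
@[simp] lemma one_snd : (1 : K D).2 = 1 := rfl
@[simp] lemma inv_fst (p : K D) : (p⁻¹).1 = -((p.2 : ℤ) • p.1) := rfl
@[simp] lemma inv_snd (p : K D) : (p⁻¹).2 = p.2 := rfl

/-- The sign homomorphism with values in linear maps. -/
def sgn : ℤˣ →* (D →ₗ[ℂ] D) where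
  toFun u := ((u : ℤ) : ℂ) • LinearMap.id
  map_one' := by ext d; simp
  map_mul' u v := by
    ext d
    rcases Int.units_eq_one_or u with h | h <;> rcases Int.units_eq_one_or v with h' | h' <;>
      simp [h, h']

/-- The second-projection homomorphism `K D →* ℤˣ`. -/
def sndHom : K D →* ℤˣ where
  toFun p := p.2
  map_one' := rfl
  map_mul' _ _ := rfl

end LKaux

open LKaux in
/-- Let `G = ⟨a,b,r | aba⁻¹b⁻¹ = r² = (ra)² = (rb)² = 1⟩` be
the wallpaper group p2 and `D` a complex pre-Hilbert space. The prescription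
`π(a) = π(b) = id`, `π(r) = -id` extends to a unital `*`-representation of
`ℂ[G]` on `D`, and for any `x, y, z ∈ D` there is a unique `π`-`ε`-cocycle `η`
with `η(a) = x`, `η(b) = y`, `η(r) = z`. -/
theorem levyKhinchin_stmt11
    {D : Type*} [NormedAddCommGroup D] [InnerProductSpace ℂ D]
    (rels : Set (FreeGroup (Fin 3)))
    (hrels : rels = {FreeGroup.of 0 * FreeGroup.of 1 * (FreeGroup.of 0)⁻¹ * (FreeGroup.of 1)⁻¹,
      FreeGroup.of 2 ^ 2,
      (FreeGroup.of 2 * FreeGroup.of 0) ^ 2,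
      (FreeGroup.of 2 * FreeGroup.of 1) ^ 2})
    (a b r : PresentedGroup rels)
    (ha : a = PresentedGroup.of 0) (hb : b = PresentedGroup.of 1)
    (hr : r = PresentedGroup.of 2) :
    ∃ π : PresentedGroup rels →* (D →ₗ[ℂ] D),
      π a = LinearMap.id ∧ π b = LinearMap.id ∧ π r = -LinearMap.id ∧
      (∀ (g : PresentedGroup rels) (u v : D), ⟪π g⁻¹ u, v⟫_ℂ = ⟪u, π g v⟫_ℂ) ∧
      ∀ x y z : D, ∃! η : PresentedGroup rels → D,
        (∀ g h, η (g * h) = π g (η h) + η g) ∧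
        η a = x ∧ η b = y ∧ η r = z := by
  subst ha hb hr
  -- the sign character
  set f : Fin 3 → ℤˣ := ![1, 1, -1] with hf
  have hrel : ∀ w ∈ rels, FreeGroup.lift f w = 1 := by
    intro w hw
    rw [hrels] at hw
    rcases hw with h | h | h | h <;> subst h <;>
      simp only [pow_two, map_mul, map_inv, FreeGroup.lift_apply_of] <;> simp [hf]
  set π' : PresentedGroup rels →* ℤˣ := PresentedGroup.toGroup hrel with hπ'
  set π : PresentedGroup rels →* (D →ₗ[ℂ] D) := sgn.comp π' with hπdef
  have hπof : ∀ i, π (PresentedGroup.of i) = ((f i : ℤ) : ℂ) • LinearMap.id := by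
    intro i
    simp only [hπdef, MonoidHom.comp_apply, hπ', PresentedGroup.toGroup.of]
    rfl
  have hπapp : ∀ g (v : D), π g v = ((π' g : ℤ) : ℂ) • v := by
    intro g v; rfl
  refine ⟨π, ?_, ?_, ?_, ?_, ?_⟩
  · rw [hπof]; norm_num [hf]
  · rw [hπof]; norm_num [hf]
  · rw [hπof]; ext v; simp [hf]
  · intro g u v
    rcases Int.units_eq_one_or (π' g) with h | h
    · have h' : π' g⁻¹ = 1 := by rw [map_inv, h]; rfl
      simp [hπapp, h, h']
    · have h' : π' g⁻¹ = -1 := by rw [map_inv, h]; rfl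
      simp [hπapp, h, h', inner_neg_left, inner_neg_right]
  · intro x y z
    -- construct η via a hom to the semidirect product
    set F : Fin 3 → K D := ![(x, 1), (y, 1), (z, -1)] with hF
    have hrelK : ∀ w ∈ rels, FreeGroup.lift F w = 1 := by
      intro w hw
      rw [hrels] at hw
      rcases hw with h | h | h | h <;> subst h <;>
        · simp only [pow_two, map_mul, map_inv, FreeGroup.lift_apply_of]
          refine Prod.ext ?_ ?_ <;> simp only [mul_fst, mul_snd, inv_fst, inv_snd, one_fst, one_snd] <;> simp [hF] <;> abel
    set φ : PresentedGroup rels →* K D := PresentedGroup.toGroup hrelK with hφ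
    -- the sign components agree
    have hsnd : ∀ g, (φ g).2 = π' g := by
      have heq : sndHom.comp φ = π' := by
        apply PresentedGroup.ext
        intro i
        fin_cases i <;>
          simp only [MonoidHom.comp_apply, hφ, hπ', PresentedGroup.toGroup.of] <;> rfl
      intro g
      exact congrArg (fun ψ => ψ g) heq
    set η : PresentedGroup rels → D := fun g => (φ g).1 with hη
    have hcoc : ∀ g h, η (g * h) = π g (η h) + η g := by
      intro g h
      have h1 : (φ (g * h)).1 = (φ g).1 + ((φ g).2 : ℤ) • (φ h).1 := by rw [map_mul]; rfl
      simp only [hη, h1, hsnd, hπapp, Int.cast_smul_eq_zsmul]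
      abel
    have hηof : ∀ i, η (PresentedGroup.of i) = (F i).1 := by
      intro i; simp only [hη, hφ, PresentedGroup.toGroup.of]
    refine ⟨η, ⟨hcoc, by rw [hηof]; rfl, by rw [hηof]; rfl, by rw [hηof]; rfl⟩, ?_⟩
    -- uniqueness
    rintro η₂ ⟨hcoc₂, ha₂, hb₂, hr₂⟩
    have hone : ∀ (ξ : PresentedGroup rels → D),
        (∀ g h, ξ (g * h) = π g (ξ h) + ξ g) → ξ 1 = 0 := by
      intro ξ hξ
      have h := hξ 1 1
      rw [mul_one, map_one] at h
      simp only [Module.End.one_apply] at h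
      exact left_eq_add.mp h
    have hinv : ∀ (ξ : PresentedGroup rels → D),
        (∀ g h, ξ (g * h) = π g (ξ h) + ξ g) → ∀ g, ξ g⁻¹ = -(π g⁻¹ (ξ g)) := by
      intro ξ hξ g
      have h := hξ g⁻¹ g
      rw [inv_mul_cancel, hone ξ hξ] at h
      exact eq_neg_of_add_eq_zero_right h.symm
    -- the agreement set is a subgroup containing the generators
    let S : Subgroup (PresentedGroup rels) :=
      { carrier := {g | η₂ g = η g}
        one_mem' := by
          show η₂ 1 = η 1
          rw [hone η₂ hcoc₂, hone η hcoc]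
        mul_mem' := by
          intro g h hg hh
          show η₂ (g * h) = η (g * h)
          rw [hcoc₂, hcoc, hg, hh]
        inv_mem' := by
          intro g hg
          show η₂ g⁻¹ = η g⁻¹
          rw [hinv η₂ hcoc₂, hinv η hcoc, hg] }
    have hS : ∀ g, g ∈ S := by
      have hle : Subgroup.closure (Set.range (PresentedGroup.of :
          Fin 3 → PresentedGroup rels)) ≤ S := by
        rw [Subgroup.closure_le]
        rintro g ⟨i, rfl⟩
        show η₂ (PresentedGroup.of i) = η (PresentedGroup.of i)
        rw [hηof]
        fin_cases i
        · simpa [hF] using ha₂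
        · simpa [hF] using hb₂
        · simpa [hF] using hr₂
      rw [PresentedGroup.closure_range_of] at hle
      intro g
      exact hle (Subgroup.mem_top g)
    funext g
    exact hS g
end

section
/- Let G be the wallpaper group p2, π the *-representation of ℂ[G] on a pre-Hilbert space D with π(a) = π(b) = id, π(r) = −id, and η the π-ε-cocycle with η(a) = x, η(b) = y, η(r) = z. If there exists a generating functional ψ completing (π, η) to a Schürmann triple, then ⟨x, y⟩ ∈ ℝ. In particular, for D = ℂ, x = 1, y = i, z = 0, the cocycle η admits no generating functional, so (ℂ[G], ε) fails property (NC) and (AC). -/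
open scoped InnerProductSpace

lemma lk12_key {D : Type} [NormedAddCommGroup D] [InnerProductSpace ℂ D]
    {G : Type*} [Group G] (a b : G) (hcomm : a * b = b * a)
    (π : G →* (D →ₗ[ℂ] D)) (hπa : π a = LinearMap.id) (hπb : π b = LinearMap.id)
    (x y : D) (η : G → D)
    (hη : ∀ g h, η (g * h) = π g (η h) + η g)
    (hx : η a = x) (hy : η b = y)
    (hψ : ∃ ψ : G → ℂ,
      (∀ g, ψ g⁻¹ = starRingEnd ℂ (ψ g)) ∧
      (∀ g h, ψ (g * h) = ψ g + ψ h + ⟪η g⁻¹, η h⟫_ℂ)) :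
    (⟪x, y⟫_ℂ).im = 0 := by
  obtain ⟨ψ, -, hcob⟩ := hψ
  have hη1 : η 1 = 0 := by
    have h := hη 1 1
    rw [one_mul, map_one, Module.End.one_apply] at h
    exact (right_eq_add.mp h)
  have hainv : η a⁻¹ = -x := by
    have h := hη a a⁻¹
    rw [mul_inv_cancel, hη1, hπa, LinearMap.id_apply, hx] at h
    linear_combination (norm := abel) -h
  have hbinv : η b⁻¹ = -y := by
    have h := hη b b⁻¹
    rw [mul_inv_cancel, hη1, hπb, LinearMap.id_apply, hy] at h
    linear_combination (norm := abel) -h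
  have h1 := hcob a b
  have h2 := hcob b a
  rw [hcomm] at h1
  rw [h2, hainv, hbinv, hx, hy, inner_neg_left, inner_neg_left] at h1
  have hsym : ⟪x, y⟫_ℂ = ⟪y, x⟫_ℂ := by linear_combination h1
  have hconj : ⟪x, y⟫_ℂ = starRingEnd ℂ ⟪x, y⟫_ℂ :=
    hsym.trans (inner_conj_symm y x).symm
  have him := congrArg Complex.im hconj
  rw [Complex.conj_im] at him
  linarith

/-- Let `G` be the wallpaper group p2, `π` the representation
with `π(a) = π(b) = id`, `π(r) = -id`, and `η` the `π`-`ε`-cocycle with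
`η(a) = x`, `η(b) = y`, `η(r) = z`. If `(π, η)` can be completed to a Schürmann
triple by a generating functional `ψ`, then `⟪x, y⟫ ∈ ℝ`. In particular, for
`D = ℂ`, `x = 1`, `y = i`, `z = 0`, no generating functional exists; hence
`(ℂ[G], ε)` does not have properties (NC) or (AC). -/
theorem levyKhinchin_stmt12
    (rels : Set (FreeGroup (Fin 3)))
    (hrels : rels = {FreeGroup.of 0 * FreeGroup.of 1 * (FreeGroup.of 0)⁻¹ * (FreeGroup.of 1)⁻¹,
      FreeGroup.of 2 ^ 2,
      (FreeGroup.of 2 * FreeGroup.of 0) ^ 2,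
      (FreeGroup.of 2 * FreeGroup.of 1) ^ 2})
    (a b r : PresentedGroup rels)
    (ha : a = PresentedGroup.of 0) (hb : b = PresentedGroup.of 1)
    (hr : r = PresentedGroup.of 2) :
    (∀ {D : Type} [NormedAddCommGroup D] [InnerProductSpace ℂ D]
      (π : PresentedGroup rels →* (D →ₗ[ℂ] D)),
      π a = LinearMap.id → π b = LinearMap.id → π r = -LinearMap.id →
      ∀ (x y z : D) (η : PresentedGroup rels → D),
        (∀ g h, η (g * h) = π g (η h) + η g) →
        η a = x → η b = y → η r = z →
        (∃ ψ : PresentedGroup rels → ℂ,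
          (∀ g, ψ g⁻¹ = starRingEnd ℂ (ψ g)) ∧
          (∀ g h, ψ (g * h) = ψ g + ψ h + ⟪η g⁻¹, η h⟫_ℂ)) →
        (⟪x, y⟫_ℂ).im = 0) ∧
    ∀ (π : PresentedGroup rels →* (ℂ →ₗ[ℂ] ℂ)),
      π a = LinearMap.id → π b = LinearMap.id → π r = -LinearMap.id →
      ∀ η : PresentedGroup rels → ℂ,
        (∀ g h, η (g * h) = π g (η h) + η g) →
        η a = 1 → η b = Complex.I → η r = 0 →
        ¬ ∃ ψ : PresentedGroup rels → ℂ,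
          (∀ g, ψ g⁻¹ = starRingEnd ℂ (ψ g)) ∧
          (∀ g h, ψ (g * h) = ψ g + ψ h + ⟪η g⁻¹, η h⟫_ℂ) := by
  have hcomm : a * b = b * a := by
    rw [ha, hb]
    have : (PresentedGroup.of 0 : PresentedGroup rels) * PresentedGroup.of 1 *
        (PresentedGroup.of 0)⁻¹ * (PresentedGroup.of 1)⁻¹ = 1 := by
      have hmem : FreeGroup.of 0 * FreeGroup.of 1 * (FreeGroup.of 0)⁻¹ * (FreeGroup.of 1)⁻¹
          ∈ Subgroup.normalClosure rels := by
        apply Subgroup.subset_normalClosure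
        rw [hrels]; left; rfl
      exact (QuotientGroup.eq_one_iff _).mpr hmem
    exact mul_inv_eq_one.mp (by rw [mul_inv_rev, ← mul_assoc]; exact this)
  constructor
  · intro D _ _ π hπa hπb _ x y z η hη hx hy _ hψ
    exact lk12_key a b hcomm π hπa hπb x y η hη hx hy hψ
  · intro π hπa hπb hπr η hη hx hy hz hψ
    have := lk12_key a b hcomm π hπa hπb 1 Complex.I η hη hx hy hψ
    simp [RCLike.inner_apply] at this
end

section
/- Let A = ℂ[ℤ²] with generators a, b (commuting, invertible, unitary: a* = a⁻¹, b* = b⁻¹) and ε the trivial character. Let η: A → D be a Gaussian cocycle (ε-ε-derivation) into an inner product space D. If η admits a generating functional ψ (so that (ε·id, η, ψ) is a Schürmann triple), then ⟨η(a), η(b)⟩ ∈ ℝ. Conversely, if ⟨η(a), η(b)⟩ ∈ ℝ then such a generating functional exists. -/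
open scoped InnerProductSpace

/-- A Gaussian cocycle `η` on `ℂ[ℤ²]` (with generators
`a = (1,0)`, `b = (0,1)` and trivial character) admits a generating functional
`ψ` (making `(ε·id, η, ψ)` a Schürmann triple) if and only if
`⟪η(a), η(b)⟫ ∈ ℝ`. -/
theorem levyKhinchin_stmt13
    {D : Type*} [NormedAddCommGroup D] [InnerProductSpace ℂ D]
    (η : Multiplicative (ℤ × ℤ) → D)
    (hη : ∀ g h : Multiplicative (ℤ × ℤ), η (g * h) = η g + η h)
    (a b : Multiplicative (ℤ × ℤ))
    (ha : a = Multiplicative.ofAdd (1, 0)) (hb : b = Multiplicative.ofAdd (0, 1)) :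
    (∃ ψ : Multiplicative (ℤ × ℤ) → ℂ,
      (∀ g, ψ g⁻¹ = starRingEnd ℂ (ψ g)) ∧
      (∀ g h, ψ (g * h) = ψ g + ψ h + ⟪η g⁻¹, η h⟫_ℂ)) ↔
    (⟪η a, η b⟫_ℂ).im = 0 := by
  have h1 : η 1 = 0 := by have := hη 1 1; simp at this; exact this
  have hinv : ∀ g, η g⁻¹ = - η g := by
    intro g
    have := hη g g⁻¹
    rw [mul_inv_cancel, h1] at this
    exact eq_neg_of_add_eq_zero_right this.symm
  constructor
  · rintro ⟨ψ, -, hcoc⟩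
    have h1' := hcoc a b
    have h2 := hcoc b a
    rw [mul_comm a b] at h1'
    have key : ⟪η a, η b⟫_ℂ = ⟪η b, η a⟫_ℂ := by
      have heq := h1'.symm.trans h2
      have : ⟪η a⁻¹, η b⟫_ℂ = ⟪η b⁻¹, η a⟫_ℂ := by linear_combination heq
      rw [hinv, hinv, inner_neg_left, inner_neg_left, neg_inj] at this
      exact this
    have hc : starRingEnd ℂ (⟪η a, η b⟫_ℂ) = ⟪η a, η b⟫_ℂ := by
      rw [inner_conj_symm, key]
    exact Complex.conj_eq_iff_im.mp hc
  · intro him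
    have hgen : ∀ g : Multiplicative (ℤ × ℤ),
        η g = ((Multiplicative.toAdd g).1 : ℂ) • η a + ((Multiplicative.toAdd g).2 : ℂ) • η b := by
      intro g
      have hF : ∀ m : ℤ, η (Multiplicative.ofAdd (m, 0)) = m • η a := by
        intro m
        let F : ℤ →+ D := AddMonoidHom.mk' (fun m => η (Multiplicative.ofAdd (m, 0)))
          (fun p q => by
            show η (Multiplicative.ofAdd ((p, 0) + (q, 0))) = _
            rw [show ((p, (0:ℤ)) + (q, 0)) = ((p + q : ℤ), (0:ℤ)) by simp]
            exact hη (Multiplicative.ofAdd (p, 0)) (Multiplicative.ofAdd (q, 0)))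
        have : F m = m • F 1 := by rw [← F.map_zsmul, smul_eq_mul, mul_one]
        simpa [F, ha] using this
      have hG : ∀ n : ℤ, η (Multiplicative.ofAdd (0, n)) = n • η b := by
        intro n
        let G : ℤ →+ D := AddMonoidHom.mk' (fun n => η (Multiplicative.ofAdd (0, n)))
          (fun p q => by
            show η (Multiplicative.ofAdd ((0, p) + (0, q))) = _
            rw [show (((0:ℤ), p) + (0, q)) = ((0:ℤ), (p + q : ℤ)) by simp]
            exact hη (Multiplicative.ofAdd (0, p)) (Multiplicative.ofAdd (0, q)))
        have : G n = n • G 1 := by rw [← G.map_zsmul, smul_eq_mul, mul_one]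
        simpa [G, hb] using this
      have hsum : (((Multiplicative.toAdd g).1, (0:ℤ)) + ((0:ℤ), (Multiplicative.toAdd g).2))
          = Multiplicative.toAdd g := by simp
      calc η g = η (Multiplicative.ofAdd
            (((Multiplicative.toAdd g).1, (0:ℤ)) + ((0:ℤ), (Multiplicative.toAdd g).2))) := by
              rw [hsum]; rfl
        _ = η (Multiplicative.ofAdd ((Multiplicative.toAdd g).1, (0:ℤ)))
            + η (Multiplicative.ofAdd ((0:ℤ), (Multiplicative.toAdd g).2)) :=
              hη _ _
        _ = ((Multiplicative.toAdd g).1 : ℂ) • η a + ((Multiplicative.toAdd g).2 : ℂ) • η b := by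
              rw [hF, hG, ← Int.cast_smul_eq_zsmul ℂ, ← Int.cast_smul_eq_zsmul ℂ]
    set r : ℝ := (⟪η a, η b⟫_ℂ).re with hr
    have hab : ⟪η a, η b⟫_ℂ = (r : ℂ) := Complex.ext (by simp [hr]) (by simp [him])
    have hba : ⟪η b, η a⟫_ℂ = (r : ℂ) := by rw [← inner_conj_symm, hab]; simp
    have hAA : ⟪η a, η a⟫_ℂ = ((‖η a‖^2 : ℝ) : ℂ) := by
      rw [inner_self_eq_norm_sq_to_K]; norm_cast
    have hBB : ⟪η b, η b⟫_ℂ = ((‖η b‖^2 : ℝ) : ℂ) := by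
      rw [inner_self_eq_norm_sq_to_K]; norm_cast
    refine ⟨fun g => ((-((((Multiplicative.toAdd g).1:ℝ)^2 * ‖η a‖^2
        + ((Multiplicative.toAdd g).2:ℝ)^2 * ‖η b‖^2
        + 2 * ((Multiplicative.toAdd g).1:ℝ) * ((Multiplicative.toAdd g).2:ℝ) * r) / 2 : ℝ)) : ℂ),
        ?_, ?_⟩
    · intro g
      dsimp only
      have h1' : (Multiplicative.toAdd g⁻¹).1 = -(Multiplicative.toAdd g).1 := rfl
      have h2' : (Multiplicative.toAdd g⁻¹).2 = -(Multiplicative.toAdd g).2 := rfl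
      rw [h1', h2']; simp only [map_neg, Complex.conj_ofReal]
      push_cast
      ring
    · intro g h
      dsimp only
      have h1' : (Multiplicative.toAdd (g*h)).1
          = (Multiplicative.toAdd g).1 + (Multiplicative.toAdd h).1 := rfl
      have h2' : (Multiplicative.toAdd (g*h)).2
          = (Multiplicative.toAdd g).2 + (Multiplicative.toAdd h).2 := rfl
      rw [h1', h2', hinv, hgen g, hgen h]
      simp only [inner_neg_left, inner_add_left, inner_add_right, inner_smul_left,
        inner_smul_right, hab, hba, hAA, hBB, map_intCast]
      push_cast
      ring
end

section
/- Let A be the unital *-algebra over ℂ with generators x, y and relations x* = x, x²y = −y, y*y = 0, with character ε determined by ε(x) = ε(y) = 0. Then for every unital *-representation π of A on a complex pre-Hilbert space D and every π-ε-cocycle η: A → D, one has π(y) = π(y*) = 0 and η(y) = η(y*) = 0. -/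
open scoped InnerProductSpace

/-- Let `A` be the unital complex `*`-algebra with generators
`x, y` and relations `x* = x`, `x²y = -y`, `y*y = 0`, and `ε` the character with
`ε(x) = ε(y) = 0` (formalized for any `*`-algebra with distinguished elements
`x, y` satisfying these relations, which covers the universal one). Then for
every unital `*`-representation `π` on a pre-Hilbert space `D` and every
`π`-`ε`-cocycle `η` one has `π(y) = π(y*) = 0` and `η(y) = η(y*) = 0`. -/
theorem levyKhinchin_stmt14
    {A : Type*} [Ring A] [Algebra ℂ A] [StarRing A] [StarModule ℂ A]
    {D : Type*} [NormedAddCommGroup D] [InnerProductSpace ℂ D]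
    (x y : A) (hx : star x = x) (hxy : x ^ 2 * y = -y) (hyy : star y * y = 0)
    (ε : A →⋆ₐ[ℂ] ℂ) (hεx : ε x = 0) (hεy : ε y = 0)
    (π : A →ₐ[ℂ] (D →ₗ[ℂ] D))
    (hπ : ∀ (a : A) (u v : D), ⟪π (star a) u, v⟫_ℂ = ⟪u, π a v⟫_ℂ)
    (η : A →ₗ[ℂ] D)
    (hη : ∀ a b : A, η (a * b) = π a (η b) + ε b • η a) :
    π y = 0 ∧ π (star y) = 0 ∧ η y = 0 ∧ η (star y) = 0 := by
  -- π y = 0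
  have hπy : π y = 0 := by
    ext u
    simp only [LinearMap.zero_apply]
    rw [← inner_self_eq_zero (𝕜 := ℂ)]
    have h1 : ⟪π y u, π y u⟫_ℂ = ⟪u, π (star y) (π y u)⟫_ℂ := by
      have := hπ (star y) u (π y u)
      rwa [star_star] at this
    have h2 : π (star y) (π y u) = 0 := by
      have h3 : π (star y) (π y u) = π (star y * y) u := by rw [map_mul]; rfl
      rw [h3, hyy, map_zero]; rfl
    rw [h1, h2, inner_zero_right]
  have hπys : π (star y) = 0 := by
    ext u
    simp only [LinearMap.zero_apply]
    rw [← inner_self_eq_zero (𝕜 := ℂ)]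
    rw [hπ y u (π (star y) u), hπy]
    simp
  -- η y = 0
  have hηy : η y = 0 := by
    have hy : y = -(x ^ 2 * y) := by rw [hxy, neg_neg]
    have h1 : η y = -(π x (π x (η y))) := by
      calc η y = η (-(x ^ 2 * y)) := by rw [← hy]
        _ = -(η (x ^ 2 * y)) := by rw [map_neg]
        _ = -(π (x ^ 2) (η y) + ε y • η (x ^ 2)) := by rw [hη]
        _ = -(π x (π x (η y))) := by rw [hεy, zero_smul, add_zero, pow_two, map_mul]; rfl
    have key := hπ x (η y) (π x (η y))
    rw [hx] at key
    have h2 : ⟪η y, η y⟫_ℂ = -⟪π x (η y), π x (η y)⟫_ℂ := by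
      calc ⟪η y, η y⟫_ℂ = ⟪η y, -(π x (π x (η y)))⟫_ℂ := by rw [← h1]
        _ = -⟪η y, π x (π x (η y))⟫_ℂ := inner_neg_right _ _
        _ = -⟪π x (η y), π x (η y)⟫_ℂ := by rw [← key]
    rw [← inner_self_eq_zero (𝕜 := ℂ)]
    have hn1 : ⟪η y, η y⟫_ℂ = ((‖η y‖ : ℂ)) ^ 2 := inner_self_eq_norm_sq_to_K _
    have hn2 : ⟪π x (η y), π x (η y)⟫_ℂ = ((‖π x (η y)‖ : ℂ)) ^ 2 :=
      inner_self_eq_norm_sq_to_K _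
    rw [hn1, hn2] at h2
    have hr : (‖η y‖ ^ 2 : ℝ) = -(‖π x (η y)‖ ^ 2 : ℝ) := by
      exact_mod_cast h2
    have : (‖η y‖ ^ 2 : ℝ) = 0 := by nlinarith [sq_nonneg ‖η y‖, sq_nonneg ‖π x (η y)‖]
    rw [hn1]
    exact_mod_cast this
  -- η (star y) = 0
  have hys : star y = -(star y * x ^ 2) := by
    have := congrArg star hxy
    rw [star_mul, star_neg, star_pow, hx] at this
    rw [this, neg_neg]
  have hεx2 : ε (x ^ 2) = 0 := by rw [map_pow, hεx]; ring
  have hηys : η (star y) = 0 := by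
    rw [hys, map_neg, hη, hεx2, zero_smul, add_zero, hπys]
    simp
  exact ⟨hπy, hπys, hηy, hηys⟩
end

section
/- Let A be a unital complex *-algebra with character ε, (π, η, ψ) a Schürmann triple on (A, ε), and suppose η is Gaussian, i.e., an ε-ε-derivation. Then ψ vanishes on K₃ = span{abc : a, b, c ∈ ker(ε)}. -/
open scoped InnerProductSpace

/-- If `(π, η, ψ)` is a Schürmann triple on `(A, ε)` and `η`
is Gaussian (an `ε`-`ε`-derivation), then `ψ` vanishes on
`K₃ = span{abc : a, b, c ∈ ker ε}`. -/
theorem levyKhinchin_stmt15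
    {A : Type*} [Ring A] [Algebra ℂ A] [StarRing A] [StarModule ℂ A]
    {D : Type*} [NormedAddCommGroup D] [InnerProductSpace ℂ D]
    (ε : A →⋆ₐ[ℂ] ℂ) (π : A →ₐ[ℂ] (D →ₗ[ℂ] D))
    (hπ : ∀ (a : A) (u v : D), ⟪π (star a) u, v⟫_ℂ = ⟪u, π a v⟫_ℂ)
    (η : A →ₗ[ℂ] D)
    (hη : ∀ a b : A, η (a * b) = π a (η b) + ε b • η a)
    (hGauss : ∀ a b : A, η (a * b) = ε a • η b + ε b • η a)
    (ψ : A →ₗ[ℂ] ℂ)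
    (hherm : ∀ a : A, ψ (star a) = starRingEnd ℂ (ψ a))
    (hψ : ∀ a b : A, ε a * ψ b - ψ (a * b) + ψ a * ε b = -⟪η (star a), η b⟫_ℂ) :
    ∀ z ∈ Submodule.span ℂ
        {w : A | ∃ a b c : A, ε a = 0 ∧ ε b = 0 ∧ ε c = 0 ∧ w = a * b * c},
      ψ z = 0 := by
  intro z hz
  induction hz using Submodule.span_induction with
  | mem w hw =>
    obtain ⟨a, b, c, ha, hb, hc, rfl⟩ := hw
    have hbc : η (b * c) = 0 := by
      rw [hGauss, hb, hc, zero_smul, zero_smul, add_zero]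
    have hεbc : ε (b * c) = 0 := by rw [map_mul, hb, zero_mul]
    have := hψ a (b * c)
    rw [ha, hεbc, hbc, ← mul_assoc] at this
    simpa using this
  | zero => simp
  | add x y _ _ hx hy => simp [hx, hy]
  | smul r x _ hx => simp [hx]
end
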